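/- Under the hypotheses of the generalized hyperbolic splitting with ‖T|_M‖‖T⁻¹‖^θ < 1 and ‖T⁻¹|_N‖‖T‖^θ < 1, and β : X → X θ-Hölder with constant 2ε, the map h(x) = −Σ_{k=0}^∞ TᵏP_M(β(S^{-k-1}x)) + Σ_{k=1}^∞ T^{-k}P_N(β(S^{k-1}x)) (with S = T + β) is θ-Hölder: ‖h(x) − h(y)‖ ≤ C‖x−y‖^θ, where C = 2ε‖P_M‖ Σ_{k≥0} ‖T|_M‖ᵏ(‖T⁻¹‖+εs)^{(k+1)θ} + 2ε‖P_N‖ Σ_{k≥1} ‖T⁻¹|_N‖ᵏ(‖T‖+ε)^{(k−1)θ}, with s = ‖T⁻¹‖²/(1−‖T⁻¹‖ε), and C is finite for ε > 0 small enough. -/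

import Mathlib

set_option synthInstance.maxHeartbeats 1000000
set_option maxHeartbeats 1000000


/-- The restriction of a continuous linear map to an invariant submodule, as a
continuous linear map. -/
noncomputable def restrictCLM {X : Type*} [NormedAddCommGroup X] [NormedSpace ℝ X]
    (T : X →L[ℝ] X) (M : Submodule ℝ X) (h : ∀ x ∈ M, T x ∈ M) : M →L[ℝ] M where
  toLinearMap := (T : X →ₗ[ℝ] X).restrict h
  cont := by
    exact Continuous.subtype_mk (T.continuous.comp continuous_subtype_val) _

/-- Under the generalized hyperbolic splitting with
`‖T|_M‖‖T⁻¹‖^θ < 1`, `‖T⁻¹|_N‖‖T‖^θ < 1` (and `ε` small enough, encoded by the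
hypotheses `hsm₁`, `hsm₂`), and `β` θ-Hölder with constant `2ε`, the map
`h(x) = −Σ_{k≥0} Tᵏ P_M(β(S^{−k−1}x)) + Σ_{k≥1} T^{−k} P_N(β(S^{k−1}x))`
(with `S = T + β`) is θ-Hölder: `‖h(x) − h(y)‖ ≤ C ‖x−y‖^θ`, where `C` is the
explicit finite constant of the paper. -/
theorem conjugacy_is_holder
    {X : Type*} [NormedAddCommGroup X] [NormedSpace ℝ X] [CompleteSpace X]
    (T : X ≃L[ℝ] X) (M N : Submodule ℝ X)
    (hMclosed : IsClosed (M : Set X)) (hNclosed : IsClosed (N : Set X))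
    (hcompl : IsCompl M N)
    (hTM : ∀ x ∈ M, T x ∈ M) (hTN : ∀ x ∈ N, T.symm x ∈ N)
    (PM PN : X →L[ℝ] X)
    (hPM : ∀ x, PM x ∈ M) (hPN : ∀ x, PN x ∈ N) (hP : ∀ x, PM x + PN x = x)
    (hTMn : ‖restrictCLM (T : X →L[ℝ] X) M hTM‖ < 1)
    (hTNn : ‖restrictCLM (T.symm : X →L[ℝ] X) N hTN‖ < 1)
    (θ : ℝ) (hθ0 : 0 < θ) (hθ1 : θ ≤ 1)
    (hθM : ‖restrictCLM (T : X →L[ℝ] X) M hTM‖ * ‖(T.symm : X →L[ℝ] X)‖ ^ θ < 1)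
    (hθN : ‖restrictCLM (T.symm : X →L[ℝ] X) N hTN‖ * ‖(T : X →L[ℝ] X)‖ ^ θ < 1)
    (ε : ℝ) (hε0 : 0 < ε) (hεinv : ε * ‖(T.symm : X →L[ℝ] X)‖ < 1)
    (β : X → X) (hβuc : UniformContinuous β)
    (hβbd : ∀ x, ‖β x‖ ≤ ε) (hβlip : ∀ x y, ‖β x - β y‖ ≤ ε * ‖x - y‖)
    (s : ℝ) (hs : s = ‖(T.symm : X →L[ℝ] X)‖ ^ 2 / (1 - ‖(T.symm : X →L[ℝ] X)‖ * ε))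
    -- "ε small enough":
    (hsm₁ : ‖restrictCLM (T : X →L[ℝ] X) M hTM‖ * (‖(T.symm : X →L[ℝ] X)‖ + ε * s) ^ θ < 1)
    (hsm₂ : ‖restrictCLM (T.symm : X →L[ℝ] X) N hTN‖ * (‖(T : X →L[ℝ] X)‖ + ε) ^ θ < 1)
    -- S = T + β, as a bijection of X
    (e : X ≃ X) (he : ∀ x, e x = T x + β x)
    (h : X → X)
    (hh : ∀ x, h x = - (∑' k : ℕ, (T ^ k) (PM (β ((⇑e.symm)^[k + 1] x))))
                     + ∑' k : ℕ, (T.symm ^ (k + 1)) (PN (β ((⇑e)^[k] x))))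
    (C : ℝ)
    (hC : C = 2 * ε * ‖PM‖ *
            (∑' k : ℕ, ‖restrictCLM (T : X →L[ℝ] X) M hTM‖ ^ k *
              (‖(T.symm : X →L[ℝ] X)‖ + ε * s) ^ (((k : ℝ) + 1) * θ))
          + 2 * ε * ‖PN‖ *
            (∑' k : ℕ, ‖restrictCLM (T.symm : X →L[ℝ] X) N hTN‖ ^ (k + 1) *
              (‖(T : X →L[ℝ] X)‖ + ε) ^ ((k : ℝ) * θ))) :
    (Summable fun k : ℕ => ‖restrictCLM (T : X →L[ℝ] X) M hTM‖ ^ k *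
      (‖(T.symm : X →L[ℝ] X)‖ + ε * s) ^ (((k : ℝ) + 1) * θ)) ∧
    (Summable fun k : ℕ => ‖restrictCLM (T.symm : X →L[ℝ] X) N hTN‖ ^ (k + 1) *
      (‖(T : X →L[ℝ] X)‖ + ε) ^ ((k : ℝ) * θ)) ∧
    ∀ x y, ‖h x - h y‖ ≤ C * ‖x - y‖ ^ θ := by
  classical
  -- abbreviations
  set α := ‖restrictCLM (T : X →L[ℝ] X) M hTM‖ with hαdef
  set γ := ‖restrictCLM (T.symm : X →L[ℝ] X) N hTN‖ with hγdef
  set c := ‖(T.symm : X →L[ℝ] X)‖ with hcdef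
  set d := ‖(T : X →L[ℝ] X)‖ with hddef
  have hα0 : 0 ≤ α := by rw [hαdef]; exact ContinuousLinearMap.opNorm_nonneg _
  have hγ0 : 0 ≤ γ := by rw [hγdef]; exact ContinuousLinearMap.opNorm_nonneg _
  have hc0 : 0 ≤ c := by rw [hcdef]; exact ContinuousLinearMap.opNorm_nonneg _
  have hd0 : 0 ≤ d := by rw [hddef]; exact ContinuousLinearMap.opNorm_nonneg _
  have hden : 0 < 1 - c * ε := by nlinarith
  have hs0 : 0 ≤ s := by
    rw [hs]; exact div_nonneg (by positivity) hden.le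
  set L := c + ε * s with hLdef
  set D := d + ε with hDdef
  have hL0 : 0 ≤ L := by rw [hLdef]; positivity
  have hD0 : 0 ≤ D := by rw [hDdef]; positivity
  -- auxiliary rpow identity
  have hauxpow : ∀ (R : ℝ), 0 ≤ R → ∀ (n : ℕ), R ^ ((n : ℝ) * θ) = (R ^ θ) ^ n := by
    intro R hR n
    rw [mul_comm, Real.rpow_mul hR, Real.rpow_natCast]
  have hauxmul : ∀ (R t : ℝ), 0 ≤ R → 0 ≤ t → ∀ (n : ℕ),
      (R ^ n * t) ^ θ = R ^ ((n : ℝ) * θ) * t ^ θ := by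
    intro R t hR ht n
    rw [Real.mul_rpow (by positivity) ht, hauxpow R hR n]
    congr 1
    rw [← Real.rpow_natCast R n, ← Real.rpow_mul hR, mul_comm, Real.rpow_mul hR,
      Real.rpow_natCast]
  -- β is θ-Hölder with constant 2ε
  have hβhold : ∀ u v : X, ‖β u - β v‖ ≤ 2 * ε * ‖u - v‖ ^ θ := by
    intro u v
    rcases le_or_gt ‖u - v‖ 1 with h1 | h1
    · have h2 : ‖u - v‖ ≤ ‖u - v‖ ^ θ := by
        rcases eq_or_lt_of_le (norm_nonneg (u - v)) with h0 | h0
        · rw [← h0, Real.zero_rpow hθ0.ne']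
        · calc ‖u - v‖ = ‖u - v‖ ^ (1 : ℝ) := (Real.rpow_one _).symm
            _ ≤ ‖u - v‖ ^ θ := Real.rpow_le_rpow_of_exponent_ge h0 h1 hθ1
      have h3 : 0 ≤ ‖u - v‖ ^ θ := Real.rpow_nonneg (norm_nonneg _) θ
      calc ‖β u - β v‖ ≤ ε * ‖u - v‖ := hβlip u v
        _ ≤ ε * ‖u - v‖ ^ θ := by nlinarith
        _ ≤ 2 * ε * ‖u - v‖ ^ θ := by nlinarith
    · have h2 : (1 : ℝ) ≤ ‖u - v‖ ^ θ := Real.one_le_rpow h1.le hθ0.le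
      calc ‖β u - β v‖ ≤ ‖β u‖ + ‖β v‖ := norm_sub_le _ _
        _ ≤ 2 * ε := by linarith [hβbd u, hβbd v]
        _ ≤ 2 * ε * ‖u - v‖ ^ θ := by nlinarith
  -- norm bounds for powers of T on M
  have hTMle : ∀ w ∈ M, ‖T w‖ ≤ α * ‖w‖ := by
    intro w hw
    have := (restrictCLM (T : X →L[ℝ] X) M hTM).le_opNorm ⟨w, hw⟩
    rw [hαdef]; simpa [restrictCLM] using this
  have hTNle : ∀ w ∈ N, ‖T.symm w‖ ≤ γ * ‖w‖ := by
    intro w hw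
    have := (restrictCLM (T.symm : X →L[ℝ] X) N hTN).le_opNorm ⟨w, hw⟩
    rw [hγdef]; simpa [restrictCLM] using this
  have hMpow : ∀ (k : ℕ) (z : X), z ∈ M → (T ^ k) z ∈ M ∧ ‖(T ^ k) z‖ ≤ α ^ k * ‖z‖ := by
    intro k
    induction k with
    | zero =>
      intro z hz
      have h0 : (T ^ 0) z = z := rfl
      rw [h0]; exact ⟨hz, by simp⟩
    | succ k ih =>
      intro z hz
      have h1 : (T ^ (k + 1)) z = T ((T ^ k) z) := by rw [pow_succ']; rfl
      obtain ⟨hmem, hbd⟩ := ih z hz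
      constructor
      · rw [h1]; exact hTM _ hmem
      · rw [h1]
        calc ‖T ((T ^ k) z)‖ ≤ α * ‖(T ^ k) z‖ := hTMle _ hmem
          _ ≤ α * (α ^ k * ‖z‖) := by nlinarith
          _ = α ^ (k + 1) * ‖z‖ := by ring
  have hNpow : ∀ (k : ℕ) (z : X), z ∈ N →
      (T.symm ^ k) z ∈ N ∧ ‖(T.symm ^ k) z‖ ≤ γ ^ k * ‖z‖ := by
    intro k
    induction k with
    | zero =>
      intro z hz
      have h0 : (T.symm ^ 0) z = z := rfl
      rw [h0]; exact ⟨hz, by simp⟩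
    | succ k ih =>
      intro z hz
      have h1 : (T.symm ^ (k + 1)) z = T.symm ((T.symm ^ k) z) := by rw [pow_succ']; rfl
      obtain ⟨hmem, hbd⟩ := ih z hz
      constructor
      · rw [h1]; exact hTN _ hmem
      · rw [h1]
        calc ‖T.symm ((T.symm ^ k) z)‖ ≤ γ * ‖(T.symm ^ k) z‖ := hTNle _ hmem
          _ ≤ γ * (γ ^ k * ‖z‖) := by nlinarith
          _ = γ ^ (k + 1) * ‖z‖ := by ring
  -- one-step estimates for e and e.symm
  have hestep : ∀ u v : X, ‖e u - e v‖ ≤ D * ‖u - v‖ := by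
    intro u v
    rw [he u, he v]
    have h1 : T u + β u - (T v + β v) = T (u - v) + (β u - β v) := by
      rw [map_sub]; abel
    rw [h1, hDdef]
    have h2 : ‖T (u - v)‖ ≤ d * ‖u - v‖ := by
      have := (T : X →L[ℝ] X).le_opNorm (u - v)
      simpa using this
    calc ‖T (u - v) + (β u - β v)‖ ≤ ‖T (u - v)‖ + ‖β u - β v‖ := norm_add_le _ _
      _ ≤ d * ‖u - v‖ + ε * ‖u - v‖ := add_le_add h2 (hβlip u v)
      _ = (d + ε) * ‖u - v‖ := by ring
  have hLc : L * (1 - c * ε) = c := by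
    have hne : 1 - c * ε ≠ 0 := hden.ne'
    rw [hLdef, hs]
    field_simp
    ring
  have hbstep : ∀ u v : X, ‖e.symm u - e.symm v‖ ≤ L * ‖u - v‖ := by
    intro u v
    set a := e.symm u with hadef
    set b := e.symm v with hbdef
    have hau : T a + β a = u := by rw [← he]; exact e.apply_symm_apply u
    have hbv : T b + β b = v := by rw [← he]; exact e.apply_symm_apply v
    have hkey : T (a - b) = (u - v) - (β a - β b) := by
      rw [map_sub, ← hau, ← hbv]; abel
    have hab : a - b = T.symm ((u - v) - (β a - β b)) := by
      rw [← hkey, ContinuousLinearEquiv.symm_apply_apply]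
    have h1 : ‖a - b‖ ≤ c * (‖u - v‖ + ε * ‖a - b‖) := by
      have h2 : ‖T.symm ((u - v) - (β a - β b))‖ ≤ c * ‖(u - v) - (β a - β b)‖ := by
        have := (T.symm : X →L[ℝ] X).le_opNorm ((u - v) - (β a - β b))
        simpa using this
      have h3 : ‖(u - v) - (β a - β b)‖ ≤ ‖u - v‖ + ‖β a - β b‖ := norm_sub_le _ _
      have h4 := hβlip a b
      have h5 : ‖(u - v) - (β a - β b)‖ ≤ ‖u - v‖ + ε * ‖a - b‖ := by linarith
      calc ‖a - b‖ = ‖T.symm ((u - v) - (β a - β b))‖ := by rw [← hab]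
        _ ≤ c * ‖(u - v) - (β a - β b)‖ := h2
        _ ≤ c * (‖u - v‖ + ε * ‖a - b‖) := mul_le_mul_of_nonneg_left h5 hc0
    have h6 : ‖a - b‖ * (1 - c * ε) ≤ c * ‖u - v‖ := by nlinarith
    have h7 : L * ‖u - v‖ * (1 - c * ε) = c * ‖u - v‖ := by
      rw [mul_right_comm, hLc]
    exact le_of_mul_le_mul_right (by rw [h7]; exact h6) hden
  -- iterated estimates
  have hfiter : ∀ (n : ℕ) (u v : X), ‖(⇑e)^[n] u - (⇑e)^[n] v‖ ≤ D ^ n * ‖u - v‖ := by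
    intro n
    induction n with
    | zero => intro u v; simp
    | succ n ih =>
      intro u v
      rw [Function.iterate_succ_apply', Function.iterate_succ_apply']
      calc ‖e ((⇑e)^[n] u) - e ((⇑e)^[n] v)‖ ≤ D * ‖(⇑e)^[n] u - (⇑e)^[n] v‖ := hestep _ _
        _ ≤ D * (D ^ n * ‖u - v‖) := mul_le_mul_of_nonneg_left (ih u v) hD0
        _ = D ^ (n + 1) * ‖u - v‖ := by ring
  have hbiter : ∀ (n : ℕ) (u v : X),
      ‖(⇑e.symm)^[n] u - (⇑e.symm)^[n] v‖ ≤ L ^ n * ‖u - v‖ := by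
    intro n
    induction n with
    | zero => intro u v; simp
    | succ n ih =>
      intro u v
      rw [Function.iterate_succ_apply', Function.iterate_succ_apply']
      calc ‖e.symm ((⇑e.symm)^[n] u) - e.symm ((⇑e.symm)^[n] v)‖
          ≤ L * ‖(⇑e.symm)^[n] u - (⇑e.symm)^[n] v‖ := hbstep _ _
        _ ≤ L * (L ^ n * ‖u - v‖) := mul_le_mul_of_nonneg_left (ih u v) hL0
        _ = L ^ (n + 1) * ‖u - v‖ := by ring
  -- Summability of the two scalar series
  have hLθ0 : 0 ≤ L ^ θ := Real.rpow_nonneg hL0 θ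
  have hDθ0 : 0 ≤ D ^ θ := Real.rpow_nonneg hD0 θ
  have hLexp : ∀ k : ℕ, L ^ (((k : ℝ) + 1) * θ) = (L ^ θ) ^ (k + 1) := by
    intro k
    have h1 : ((k : ℝ) + 1) * θ = ((k + 1 : ℕ) : ℝ) * θ := by push_cast; ring
    rw [h1, hauxpow L hL0 (k + 1)]
  have hDexp : ∀ k : ℕ, D ^ ((k : ℝ) * θ) = (D ^ θ) ^ k := fun k => hauxpow D hD0 k
  have hsum1 : Summable (fun k : ℕ => α ^ k * L ^ (((k : ℝ) + 1) * θ)) := by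
    have hr0 : 0 ≤ α * L ^ θ := mul_nonneg hα0 hLθ0
    have hgeo : Summable (fun k : ℕ => (α * L ^ θ) ^ k) :=
      summable_geometric_of_lt_one hr0 hsm₁
    refine (hgeo.mul_left (L ^ θ)).congr fun k => ?_
    rw [hLexp k, pow_succ, mul_pow]; ring
  have hsum2 : Summable (fun k : ℕ => γ ^ (k + 1) * D ^ ((k : ℝ) * θ)) := by
    have hr0 : 0 ≤ γ * D ^ θ := mul_nonneg hγ0 hDθ0
    have hgeo : Summable (fun k : ℕ => (γ * D ^ θ) ^ k) :=
      summable_geometric_of_lt_one hr0 hsm₂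
    refine (hgeo.mul_left γ).congr fun k => ?_
    rw [hDexp k, mul_pow]; ring
  refine ⟨hsum1, hsum2, ?_⟩
  -- the Hölder estimate
  intro x y
  rw [hh x, hh y]
  set t := ‖x - y‖ ^ θ with htdef
  have ht0 : 0 ≤ t := Real.rpow_nonneg (norm_nonneg _) θ
  set Ax := fun k : ℕ => (T ^ k) (PM (β ((⇑e.symm)^[k + 1] x))) with hAx
  set Ay := fun k : ℕ => (T ^ k) (PM (β ((⇑e.symm)^[k + 1] y))) with hAy
  set Bx := fun k : ℕ => (T.symm ^ (k + 1)) (PN (β ((⇑e)^[k] x))) with hBx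
  set By := fun k : ℕ => (T.symm ^ (k + 1)) (PN (β ((⇑e)^[k] y))) with hBy
  -- summability of the vector series
  have hAbound : ∀ (z : X) (k : ℕ), ‖(T ^ k) (PM (β ((⇑e.symm)^[k + 1] z)))‖
      ≤ α ^ k * (‖PM‖ * ε) := by
    intro z k
    have h1 := (hMpow k _ (hPM (β ((⇑e.symm)^[k + 1] z)))).2
    have h2 : ‖PM (β ((⇑e.symm)^[k + 1] z))‖ ≤ ‖PM‖ * ε := by
      calc ‖PM (β ((⇑e.symm)^[k + 1] z))‖ ≤ ‖PM‖ * ‖β ((⇑e.symm)^[k + 1] z)‖ :=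
            PM.le_opNorm _
        _ ≤ ‖PM‖ * ε := mul_le_mul_of_nonneg_left (hβbd _) (norm_nonneg _)
    calc ‖(T ^ k) (PM (β ((⇑e.symm)^[k + 1] z)))‖ ≤ α ^ k * ‖PM (β ((⇑e.symm)^[k + 1] z))‖ :=
          h1
      _ ≤ α ^ k * (‖PM‖ * ε) := mul_le_mul_of_nonneg_left h2 (pow_nonneg hα0 k)
  have hBbound : ∀ (z : X) (k : ℕ), ‖(T.symm ^ (k + 1)) (PN (β ((⇑e)^[k] z)))‖
      ≤ γ ^ (k + 1) * (‖PN‖ * ε) := by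
    intro z k
    have h1 := (hNpow (k + 1) _ (hPN (β ((⇑e)^[k] z)))).2
    have h2 : ‖PN (β ((⇑e)^[k] z))‖ ≤ ‖PN‖ * ε := by
      calc ‖PN (β ((⇑e)^[k] z))‖ ≤ ‖PN‖ * ‖β ((⇑e)^[k] z)‖ := PN.le_opNorm _
        _ ≤ ‖PN‖ * ε := mul_le_mul_of_nonneg_left (hβbd _) (norm_nonneg _)
    calc ‖(T.symm ^ (k + 1)) (PN (β ((⇑e)^[k] z)))‖ ≤ γ ^ (k + 1) * ‖PN (β ((⇑e)^[k] z))‖ :=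
          h1
      _ ≤ γ ^ (k + 1) * (‖PN‖ * ε) := mul_le_mul_of_nonneg_left h2 (pow_nonneg hγ0 _)
  have hgeoA : Summable (fun k : ℕ => α ^ k * (‖PM‖ * ε)) :=
    (summable_geometric_of_lt_one hα0 hTMn).mul_right _
  have hgeoB : Summable (fun k : ℕ => γ ^ (k + 1) * (‖PN‖ * ε)) := by
    refine ((summable_geometric_of_lt_one hγ0 hTNn).mul_left (γ * (‖PN‖ * ε))).congr
      fun k => ?_
    ring
  have hsAx : Summable Ax := Summable.of_norm
    (Summable.of_nonneg_of_le (fun k => norm_nonneg _) (fun k => hAbound x k) hgeoA)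
  have hsAy : Summable Ay := Summable.of_norm
    (Summable.of_nonneg_of_le (fun k => norm_nonneg _) (fun k => hAbound y k) hgeoA)
  have hsBx : Summable Bx := Summable.of_norm
    (Summable.of_nonneg_of_le (fun k => norm_nonneg _) (fun k => hBbound x k) hgeoB)
  have hsBy : Summable By := Summable.of_norm
    (Summable.of_nonneg_of_le (fun k => norm_nonneg _) (fun k => hBbound y k) hgeoB)
  -- termwise difference estimates
  have hAdiff : ∀ k : ℕ, ‖Ax k - Ay k‖
      ≤ 2 * ε * ‖PM‖ * (α ^ k * L ^ (((k : ℝ) + 1) * θ)) * t := by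
    intro k
    have h1 : Ax k - Ay k =
        (T ^ k) (PM (β ((⇑e.symm)^[k + 1] x) - β ((⇑e.symm)^[k + 1] y))) := by
      rw [hAx, hAy]; rw [← map_sub, ← map_sub]
    rw [h1]
    have hmem : PM (β ((⇑e.symm)^[k + 1] x) - β ((⇑e.symm)^[k + 1] y)) ∈ M := hPM _
    have h2 := (hMpow k _ hmem).2
    have h3 := PM.le_opNorm (β ((⇑e.symm)^[k + 1] x) - β ((⇑e.symm)^[k + 1] y))
    have h4 := hβhold ((⇑e.symm)^[k + 1] x) ((⇑e.symm)^[k + 1] y)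
    have h5 := hbiter (k + 1) x y
    have h6 : ‖(⇑e.symm)^[k + 1] x - (⇑e.symm)^[k + 1] y‖ ^ θ
        ≤ (L ^ (k + 1) * ‖x - y‖) ^ θ :=
      Real.rpow_le_rpow (norm_nonneg _) h5 hθ0.le
    have h7 : (L ^ (k + 1) * ‖x - y‖) ^ θ = L ^ (((k : ℝ) + 1) * θ) * t := by
      rw [htdef, hauxmul L ‖x - y‖ hL0 (norm_nonneg _) (k + 1)]
      congr 2
      push_cast; ring
    have h8 : 0 ≤ (L ^ (k + 1) * ‖x - y‖) ^ θ := Real.rpow_nonneg (by positivity) θ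
    calc ‖(T ^ k) (PM (β ((⇑e.symm)^[k + 1] x) - β ((⇑e.symm)^[k + 1] y)))‖
        ≤ α ^ k * ‖PM (β ((⇑e.symm)^[k + 1] x) - β ((⇑e.symm)^[k + 1] y))‖ := h2
      _ ≤ α ^ k * (‖PM‖ * ‖β ((⇑e.symm)^[k + 1] x) - β ((⇑e.symm)^[k + 1] y)‖) :=
          mul_le_mul_of_nonneg_left h3 (pow_nonneg hα0 k)
      _ ≤ α ^ k * (‖PM‖ * (2 * ε * ‖(⇑e.symm)^[k + 1] x - (⇑e.symm)^[k + 1] y‖ ^ θ)) :=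
          mul_le_mul_of_nonneg_left (mul_le_mul_of_nonneg_left h4 (norm_nonneg _))
            (pow_nonneg hα0 k)
      _ ≤ α ^ k * (‖PM‖ * (2 * ε * ((L ^ (k + 1) * ‖x - y‖) ^ θ))) := by
          have : 2 * ε * ‖(⇑e.symm)^[k + 1] x - (⇑e.symm)^[k + 1] y‖ ^ θ
              ≤ 2 * ε * ((L ^ (k + 1) * ‖x - y‖) ^ θ) :=
            mul_le_mul_of_nonneg_left h6 (by positivity)
          exact mul_le_mul_of_nonneg_left (mul_le_mul_of_nonneg_left this (norm_nonneg _))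
            (pow_nonneg hα0 k)
      _ = 2 * ε * ‖PM‖ * (α ^ k * L ^ (((k : ℝ) + 1) * θ)) * t := by rw [h7]; ring
  have hBdiff : ∀ k : ℕ, ‖Bx k - By k‖
      ≤ 2 * ε * ‖PN‖ * (γ ^ (k + 1) * D ^ ((k : ℝ) * θ)) * t := by
    intro k
    have h1 : Bx k - By k =
        (T.symm ^ (k + 1)) (PN (β ((⇑e)^[k] x) - β ((⇑e)^[k] y))) := by
      rw [hBx, hBy]; rw [← map_sub, ← map_sub]
    rw [h1]
    have hmem : PN (β ((⇑e)^[k] x) - β ((⇑e)^[k] y)) ∈ N := hPN _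
    have h2 := (hNpow (k + 1) _ hmem).2
    have h3 := PN.le_opNorm (β ((⇑e)^[k] x) - β ((⇑e)^[k] y))
    have h4 := hβhold ((⇑e)^[k] x) ((⇑e)^[k] y)
    have h5 := hfiter k x y
    have h6 : ‖(⇑e)^[k] x - (⇑e)^[k] y‖ ^ θ ≤ (D ^ k * ‖x - y‖) ^ θ :=
      Real.rpow_le_rpow (norm_nonneg _) h5 hθ0.le
    have h7 : (D ^ k * ‖x - y‖) ^ θ = D ^ ((k : ℝ) * θ) * t := by
      rw [htdef, hauxmul D ‖x - y‖ hD0 (norm_nonneg _) k]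
    calc ‖(T.symm ^ (k + 1)) (PN (β ((⇑e)^[k] x) - β ((⇑e)^[k] y)))‖
        ≤ γ ^ (k + 1) * ‖PN (β ((⇑e)^[k] x) - β ((⇑e)^[k] y))‖ := h2
      _ ≤ γ ^ (k + 1) * (‖PN‖ * ‖β ((⇑e)^[k] x) - β ((⇑e)^[k] y)‖) :=
          mul_le_mul_of_nonneg_left h3 (pow_nonneg hγ0 _)
      _ ≤ γ ^ (k + 1) * (‖PN‖ * (2 * ε * ‖(⇑e)^[k] x - (⇑e)^[k] y‖ ^ θ)) :=
          mul_le_mul_of_nonneg_left (mul_le_mul_of_nonneg_left h4 (norm_nonneg _))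
            (pow_nonneg hγ0 _)
      _ ≤ γ ^ (k + 1) * (‖PN‖ * (2 * ε * ((D ^ k * ‖x - y‖) ^ θ))) := by
          have : 2 * ε * ‖(⇑e)^[k] x - (⇑e)^[k] y‖ ^ θ
              ≤ 2 * ε * ((D ^ k * ‖x - y‖) ^ θ) :=
            mul_le_mul_of_nonneg_left h6 (by positivity)
          exact mul_le_mul_of_nonneg_left (mul_le_mul_of_nonneg_left this (norm_nonneg _))
            (pow_nonneg hγ0 _)
      _ = 2 * ε * ‖PN‖ * (γ ^ (k + 1) * D ^ ((k : ℝ) * θ)) * t := by rw [h7]; ring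
  -- summable bounds
  have hfsum : Summable (fun k : ℕ => 2 * ε * ‖PM‖ * (α ^ k * L ^ (((k : ℝ) + 1) * θ)) * t) :=
    (hsum1.mul_left (2 * ε * ‖PM‖)).mul_right t
  have hgsum : Summable (fun k : ℕ => 2 * ε * ‖PN‖ * (γ ^ (k + 1) * D ^ ((k : ℝ) * θ)) * t) :=
    (hsum2.mul_left (2 * ε * ‖PN‖)).mul_right t
  have hAn : Summable (fun k : ℕ => ‖Ax k - Ay k‖) :=
    Summable.of_nonneg_of_le (fun k => norm_nonneg _) hAdiff hfsum
  have hBn : Summable (fun k : ℕ => ‖Bx k - By k‖) :=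
    Summable.of_nonneg_of_le (fun k => norm_nonneg _) hBdiff hgsum
  -- put the pieces together
  have key : (-(∑' k : ℕ, Ax k) + ∑' k : ℕ, Bx k) - (-(∑' k : ℕ, Ay k) + ∑' k : ℕ, By k)
      = (∑' k : ℕ, (Bx k - By k)) - ∑' k : ℕ, (Ax k - Ay k) := by
    rw [Summable.tsum_sub hsBx hsBy, Summable.tsum_sub hsAx hsAy]
    abel
  rw [key]
  have e1 : ∑' k : ℕ, (2 * ε * ‖PM‖ * (α ^ k * L ^ (((k : ℝ) + 1) * θ)) * t)
      = 2 * ε * ‖PM‖ * ((∑' k : ℕ, α ^ k * L ^ (((k : ℝ) + 1) * θ)) * t) := by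
    rw [tsum_mul_right, tsum_mul_left, mul_assoc]
  have e2 : ∑' k : ℕ, (2 * ε * ‖PN‖ * (γ ^ (k + 1) * D ^ ((k : ℝ) * θ)) * t)
      = 2 * ε * ‖PN‖ * ((∑' k : ℕ, γ ^ (k + 1) * D ^ ((k : ℝ) * θ)) * t) := by
    rw [tsum_mul_right, tsum_mul_left, mul_assoc]
  calc ‖(∑' k : ℕ, (Bx k - By k)) - ∑' k : ℕ, (Ax k - Ay k)‖
      ≤ ‖∑' k : ℕ, (Bx k - By k)‖ + ‖∑' k : ℕ, (Ax k - Ay k)‖ := norm_sub_le _ _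
    _ ≤ (∑' k : ℕ, ‖Bx k - By k‖) + ∑' k : ℕ, ‖Ax k - Ay k‖ :=
        add_le_add (norm_tsum_le_tsum_norm hBn) (norm_tsum_le_tsum_norm hAn)
    _ ≤ (∑' k : ℕ, 2 * ε * ‖PN‖ * (γ ^ (k + 1) * D ^ ((k : ℝ) * θ)) * t)
        + ∑' k : ℕ, 2 * ε * ‖PM‖ * (α ^ k * L ^ (((k : ℝ) + 1) * θ)) * t :=
        add_le_add (Summable.tsum_le_tsum hBdiff hBn hgsum) (Summable.tsum_le_tsum hAdiff hAn hfsum)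
    _ = C * t := by rw [e1, e2, hC]; ring
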